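/- If a subset Q ⊆ S(W) is a suspension from a linear subspace U and U ⊆ V, then Q is a suspension from V. -/

import Mathlib

variable {W : Type*} [NormedAddCommGroup W] [InnerProductSpace ℝ W] [FiniteDimensional ℝ W]

/-- The suspension of a subset `P` of the unit sphere `S(W)` from a linear subspace `V ⊆ W`:
the set of unit vectors `x` such that the orthogonal projection `P_V x` of `x` to `V` is zero,
or is nonzero and normalizes to a point of `P`. -/
noncomputable def susp (V : Submodule ℝ W) (P : Set W) : Set W :=
  {x : W | ‖x‖ = 1 ∧
    (((V.orthogonalProjection x : W) = 0) ∨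
      ((V.orthogonalProjection x : W) ≠ 0 ∧
        ‖(V.orthogonalProjection x : W)‖⁻¹ • (V.orthogonalProjection x : W) ∈ P))}

/-- `Q ⊆ S(W)` is a suspension from the linear subspace `V` if `Q = Susp_V(Q ∩ V)`. -/
def IsSuspensionFrom (Q : Set W) (V : Submodule ℝ W) : Prop :=
  Q = susp V (Q ∩ (V : Set W))

lemma norm_inv_smul_norm {v : W} (hv : v ≠ 0) : ‖‖v‖⁻¹ • v‖ = 1 := by
  rw [norm_smul, norm_inv, norm_norm, inv_mul_cancel₀ (norm_ne_zero_iff.mpr hv)]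

lemma normalize_smul {c : ℝ} (hc : 0 < c) (v : W) :
    ‖c • v‖⁻¹ • (c • v) = ‖v‖⁻¹ • v := by
  rw [norm_smul, Real.norm_of_nonneg hc.le, mul_inv, smul_smul]
  rw [mul_comm c⁻¹, mul_assoc, inv_mul_cancel₀ hc.ne', mul_one]

/-- If `Q ⊆ S(W)` is a suspension from `U` and `U ≤ V`, then `Q` is a suspension from `V`. -/
theorem isSuspensionFrom_of_le {Q : Set W} {U V : Submodule ℝ W}
    (hQ : IsSuspensionFrom Q U) (hUV : U ≤ V) : IsSuspensionFrom Q V := by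
  -- membership characterization of Q via U
  have hQmem : ∀ x : W, x ∈ Q ↔ ‖x‖ = 1 ∧
      (((U.orthogonalProjection x : W) = 0) ∨
        ((U.orthogonalProjection x : W) ≠ 0 ∧
          ‖(U.orthogonalProjection x : W)‖⁻¹ • (U.orthogonalProjection x : W)
            ∈ Q ∩ (U : Set W))) := by
    intro x
    conv_lhs => rw [hQ]
    rfl
  have hUV' : ∀ x : W, (U.orthogonalProjection (V.orthogonalProjection x : W) : W)
      = (U.orthogonalProjection x : W) := by
    intro x
    have := congrArg Subtype.val (Submodule.orthogonalProjectionOnto_starProjection_of_le hUV x)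
    rw [Submodule.starProjection_apply] at this
    exact this
  ext x
  constructor
  · intro hx
    obtain ⟨hx1, hcase⟩ := (hQmem x).mp hx
    refine ⟨hx1, ?_⟩
    by_cases hy : (V.orthogonalProjection x : W) = 0
    · exact Or.inl hy
    · refine Or.inr ⟨hy, ?_, ?_⟩
      · -- normalized P_V x ∈ Q
        set y : W := (V.orthogonalProjection x : W) with hydef
        have hyn : (0:ℝ) < ‖y‖⁻¹ := inv_pos.mpr (norm_pos_iff.mpr hy)
        set z : W := ‖y‖⁻¹ • y with hzdef
        have hz1 : ‖z‖ = 1 := norm_inv_smul_norm hy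
        -- compute P_U z
        have hPUz : (U.orthogonalProjection z : W) =
            ‖y‖⁻¹ • (U.orthogonalProjection x : W) := by
          rw [hzdef, map_smul]
          push_cast
          rw [hydef, hUV' x]
        refine (hQmem z).mpr ⟨hz1, ?_⟩
        rcases hcase with h0 | ⟨hne, hmem⟩
        · exact Or.inl (by rw [hPUz, h0, smul_zero])
        · refine Or.inr ⟨by rw [hPUz]; exact smul_ne_zero (ne_of_gt hyn) hne, ?_⟩
          rw [hPUz, normalize_smul hyn]
          exact hmem
      · exact Submodule.smul_mem V _ (SetLike.coe_mem _)
  · rintro ⟨hx1, hcase⟩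
    rcases hcase with h0 | ⟨hne, hmemQ, _hmemV⟩
    · -- P_V x = 0 ⇒ P_U x = 0
      refine (hQmem x).mpr ⟨hx1, Or.inl ?_⟩
      rw [← hUV' x, h0]
      simp
    · set y : W := (V.orthogonalProjection x : W) with hydef
      have hyn : (0:ℝ) < ‖y‖⁻¹ := inv_pos.mpr (norm_pos_iff.mpr hne)
      set z : W := ‖y‖⁻¹ • y with hzdef
      have hPUz : (U.orthogonalProjection z : W) =
          ‖y‖⁻¹ • (U.orthogonalProjection x : W) := by
        rw [hzdef, map_smul]
        push_cast
        rw [hydef, hUV' x]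
      obtain ⟨_, hzcase⟩ := (hQmem z).mp hmemQ
      refine (hQmem x).mpr ⟨hx1, ?_⟩
      rcases hzcase with hz0 | ⟨hzne, hzmem⟩
      · left
        rw [hPUz, smul_eq_zero] at hz0
        rcases hz0 with h | h
        · exact absurd h (ne_of_gt hyn)
        · exact h
      · right
        have hxne : (U.orthogonalProjection x : W) ≠ 0 := by
          intro h
          rw [hPUz, h, smul_zero] at hzne
          exact hzne rfl
        refine ⟨hxne, ?_⟩
        rw [hPUz, normalize_smul hyn] at hzmem
        exact hzmem
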